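/- Let all parameters be positive reals with ε ∈ (0,1) and L = log₂(1/ε). The quartic polynomial N(X) = 2βL·n₀²·τ·X⁴ + βL·n₀·τ·(m₀·n₀ + κ)·X³ + θ·(d·m₀·n₀² + 2Lω·(κ − m₀·n₀))·X − 4Lω·θ·κ·m₀ (with positive leading coefficient and strictly negative constant term) has exactly one root in (0,∞): there exists a unique γ₁ > 0 with N(γ₁) = 0; moreover N(γ) < 0 for 0 < γ < γ₁ and N(γ) > 0 for γ > γ₁. -/

import Mathlib

open Real Set Filter

theorem quartic_root_aux (a4 a3 a1 c : ℝ) (h4 : 0 < a4) (h3 : 0 < a3) (hc : 0 < c) :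
    ∃ γ₁ : ℝ, 0 < γ₁ ∧ (a4*γ₁^4 + a3*γ₁^3 + a1*γ₁ - c = 0) ∧
      (∀ γ : ℝ, 0 < γ → a4*γ^4 + a3*γ^3 + a1*γ - c = 0 → γ = γ₁) ∧
      (∀ γ : ℝ, 0 < γ → γ < γ₁ → a4*γ^4 + a3*γ^3 + a1*γ - c < 0) ∧
      (∀ γ : ℝ, γ₁ < γ → 0 < a4*γ^4 + a3*γ^3 + a1*γ - c) := by
  set f : ℝ → ℝ := fun x => a4*x^4 + a3*x^3 + a1*x - c with hf
  have hfc : Continuous f := by fun_prop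
  have mono : ∀ x y : ℝ, 0 < x → x < y → f x / x < f y / y := by
    intro x y hx hxy
    have hy : 0 < y := hx.trans hxy
    have e1 : f x / x = a4*x^3 + a3*x^2 + a1 - c/x := by
      field_simp [hf]; ring
    have e2 : f y / y = a4*y^3 + a3*y^2 + a1 - c/y := by
      field_simp [hf]; ring
    rw [e1, e2]
    have t1 : a4*x^3 < a4*y^3 :=
      mul_lt_mul_of_pos_left (pow_lt_pow_left₀ hxy hx.le (by norm_num)) h4
    have t2 : a3*x^2 < a3*y^2 :=
      mul_lt_mul_of_pos_left (pow_lt_pow_left₀ hxy hx.le (by norm_num)) h3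
    have t3 : c/y < c/x := div_lt_div_of_pos_left hc hx hxy
    linarith
  -- a negative point
  have h0 : f 0 = -c := by simp [hf]
  have hm : f ⁻¹' Iio 0 ∈ nhds (0:ℝ) :=
    hfc.continuousAt.preimage_mem_nhds (Iio_mem_nhds (by rw [h0]; linarith))
  have hm2 : f ⁻¹' Iio 0 ∈ nhdsWithin (0:ℝ) (Ioi 0) := nhdsWithin_le_nhds hm
  obtain ⟨x, hx0, hxneg⟩ : ∃ x : ℝ, x ∈ Ioi (0:ℝ) ∧ f x ∈ Iio (0:ℝ) :=
    ((Filter.eventually_of_mem self_mem_nhdsWithin (fun z hz => hz)).and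
      (Filter.eventually_of_mem hm2 (fun z hz => hz))).exists
  simp only [mem_Ioi, mem_Iio] at hx0 hxneg
  -- tendsto atTop
  have htop : Tendsto f atTop atTop := by
    have h1 : Tendsto (fun z : ℝ => a4*z^3 + a3*z^2 + a1) atTop atTop := by
      apply Filter.tendsto_atTop_add_const_right
      exact Filter.Tendsto.atTop_add_atTop
        ((tendsto_pow_atTop (by norm_num)).const_mul_atTop h4)
        ((tendsto_pow_atTop (by norm_num)).const_mul_atTop h3)
    have h2 : Tendsto (fun z : ℝ => z*(a4*z^3 + a3*z^2 + a1) + -c) atTop atTop :=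
      Filter.tendsto_atTop_add_const_right _ (-c) (tendsto_id.atTop_mul_atTop₀ h1)
    have hfe : f = fun z : ℝ => z*(a4*z^3 + a3*z^2 + a1) + -c := by
      funext z; simp only [hf]; ring
    rw [hfe]; exact h2
  obtain ⟨y, hfy, hy2⟩ := ((htop.eventually_gt_atTop 0).and (eventually_gt_atTop x)).exists
  have hxy : x < y := hy2
  have hy0 : 0 < y := hx0.trans hxy
  -- IVT
  obtain ⟨γ₁, hmem, hγeq⟩ := (intermediate_value_Icc hxy.le hfc.continuousOn)
    ⟨hxneg.le, hfy.le⟩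
  have hγ0 : 0 < γ₁ := lt_of_lt_of_le hx0 hmem.1
  have signneg : ∀ γ : ℝ, 0 < γ → γ < γ₁ → f γ < 0 := by
    intro γ hγ hlt
    have h := mono γ γ₁ hγ hlt
    rw [hγeq] at h
    simp only [zero_div] at h
    have := (div_lt_iff₀ hγ).mp h
    linarith
  have signpos : ∀ γ : ℝ, γ₁ < γ → 0 < f γ := by
    intro γ hlt
    have h := mono γ₁ γ hγ0 hlt
    rw [hγeq] at h
    simp only [zero_div] at h
    have := (lt_div_iff₀ (hγ0.trans hlt)).mp h
    linarith
  refine ⟨γ₁, hγ0, hγeq, ?_, signneg, signpos⟩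
  intro γ hγ hγz
  rcases lt_trichotomy γ γ₁ with h | h | h
  · exact absurd hγz (ne_of_lt (signneg γ hγ h))
  · exact h
  · exact absurd hγz (ne_of_gt (signpos γ h))

theorem stmt14 (m₀ n₀ d κ ω θ τ β ε L : ℝ)
    (hm : 1 < m₀) (hn : 0 < n₀) (hd : 0 < d) (hκ : 0 < κ) (hω : 0 < ω) (hθ : 0 < θ)
    (hτ : 0 < τ) (hβ : 0 < β)
    (hε : 0 < ε) (hε1 : ε < 1) (hL : L = Real.logb 2 (1/ε))
    (N : ℝ → ℝ)
    (hN : N = fun X => 2*β*L*n₀^2*τ*X^4 + β*L*n₀*τ*(m₀*n₀ + κ)*X^3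
      + θ*(d*m₀*n₀^2 + 2*L*ω*(κ - m₀*n₀))*X - 4*L*ω*θ*κ*m₀) :
    ∃ γ₁ : ℝ, 0 < γ₁ ∧ N γ₁ = 0 ∧
      (∀ γ : ℝ, 0 < γ → N γ = 0 → γ = γ₁) ∧
      (∀ γ : ℝ, 0 < γ → γ < γ₁ → N γ < 0) ∧
      (∀ γ : ℝ, γ₁ < γ → 0 < N γ) := by
  subst hN
  have hm0 : 0 < m₀ := by linarith
  have hL0 : 0 < L := by
    rw [hL]
    exact Real.logb_pos one_lt_two ((lt_div_iff₀ hε).mpr (by linarith))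
  have h4 : 0 < 2*β*L*n₀^2*τ := by positivity
  have h3 : 0 < β*L*n₀*τ*(m₀*n₀ + κ) := by positivity
  have hc : 0 < 4*L*ω*θ*κ*m₀ := by positivity
  obtain ⟨γ₁, hγ0, heq, huniq, hneg, hpos⟩ :=
    quartic_root_aux (2*β*L*n₀^2*τ) (β*L*n₀*τ*(m₀*n₀ + κ))
      (θ*(d*m₀*n₀^2 + 2*L*ω*(κ - m₀*n₀))) (4*L*ω*θ*κ*m₀) h4 h3 hc
  exact ⟨γ₁, hγ0, heq, huniq, hneg, hpos⟩
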